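/- Let Ω = {0,1}^∞, let X_1, X_2, … be the coordinate projections, and for n ≥ 1 let P_n be the σ-additive probability under which the coordinates are independent with P_n(X_k = 0) = 2^{−k} for k ≤ n and P_n(X_k = 0) = 1 for k > n; let P_∞ be the σ-additive probability with independent coordinates and P_∞(X_k = 0) = 2^{−k} for all k. Let λ be a finitely additive probability on (ℕ, 2^ℕ) vanishing on singletons and P = (1/2)P_∞ + (1/2)∫ P_n dλ(n). Then P_∞ ≪ P, P(ω^t) = P_∞(ω^t) for every cylinder ω^t, and for the event A = {ω : 1 appears infinitely often in ω}, P_∞(A|ω^t) − P(A|ω^t) = 1/2 for every ω and t; consequently P does not merge with P_∞. -/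

import Mathlib

open Filter Topology


/-- A path in `{0,1}^∞`. -/
abbrev BinSeq := ℕ → Bool

/-- The cylinder of length `t` with base `ω`: all sequences agreeing with `ω`
in the first `t` coordinates. -/
def cyl {X : Type*} (ω : ℕ → X) (t : ℕ) : Set (ℕ → X) := {ω' | ∀ i < t, ω' i = ω i}

/-- An algebra of subsets of `Ω`. -/
structure SetAlgebra (Ω : Type*) where
  sets : Set (Set Ω)
  univ_mem : Set.univ ∈ sets
  compl_mem : ∀ S ∈ sets, Sᶜ ∈ sets
  union_mem : ∀ S ∈ sets, ∀ T ∈ sets, S ∪ T ∈ sets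

/-- The algebra is a σ-algebra: closed under countable unions. -/
def SetAlgebra.IsSigmaAlgebra {Ω : Type*} (A : SetAlgebra Ω) : Prop :=
  ∀ f : ℕ → Set Ω, (∀ n, f n ∈ A.sets) → (⋃ n, f n) ∈ A.sets

/-- The power-set algebra. -/
def SetAlgebra.top (Ω : Type*) : SetAlgebra Ω :=
  ⟨Set.univ, trivial, fun _ _ => trivial, fun _ _ _ _ => trivial⟩

/-- A finitely additive probability on `(Ω, A)`.  The function `m` is defined on all
subsets for convenience; only its values on `A.sets` are constrained. -/
structure FA {Ω : Type*} (A : SetAlgebra Ω) where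
  m : Set Ω → ℝ
  nonneg : ∀ S ∈ A.sets, 0 ≤ m S
  total : m Set.univ = 1
  add : ∀ S ∈ A.sets, ∀ T ∈ A.sets, Disjoint S T → m (S ∪ T) = m S + m T

/-- Conditional probability `P(E | C) = P(E ∩ C) / P(C)`. -/
noncomputable def FA.cond {Ω : Type*} {A : SetAlgebra Ω} (P : FA A) (E C : Set Ω) : ℝ :=
  P.m (E ∩ C) / P.m C

/-- `Q` is absolutely continuous w.r.t. `P` (written `Q ≪ P` in the paper):
for every sequence of events, `P(Eₙ) → 0` implies `Q(Eₙ) → 0`. -/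
def AbsCont {Ω : Type*} {A : SetAlgebra Ω} (P Q : FA A) : Prop :=
  ∀ E : ℕ → Set Ω, (∀ n, E n ∈ A.sets) →
    Tendsto (fun n => P.m (E n)) atTop (𝓝 0) → Tendsto (fun n => Q.m (E n)) atTop (𝓝 0)

/-- `P` merges with `Q`: for every `ε > 0`, the `Q`-probability of the set of paths where
some event has conditional probabilities (given the first `t` coordinates) differing by
more than `ε` tends to `0` as `t → ∞`.  (`sup_E |P(E|ωᵗ) - Q(E|ωᵗ)| > ε` is expressed
equivalently as `∃ E`.) -/
def Merges {A : SetAlgebra BinSeq} (P Q : FA A) : Prop :=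
  ∀ ε > 0, Tendsto
    (fun t => Q.m {ω | ∃ E ∈ A.sets, ε < |P.cond E (cyl ω t) - Q.cond E (cyl ω t)|})
    atTop (𝓝 0)

/-- Membership in the algebra `F` generated by the cylinders of `{0,1}^∞`:
the finite unions of cylinders (the empty union giving `∅`). -/
def InCylAlg (S : Set BinSeq) : Prop :=
  ∃ (n : ℕ) (f : Fin n → BinSeq × ℕ), S = ⋃ i, cyl (f i).1 (f i).2

/-- `Q` agrees with `P` on the algebra generated by cylinders, i.e. `Q` is an
extension of `P_F` from `F` to `Σ`. -/
def ExtAgree {A : SetAlgebra BinSeq} (P Q : FA A) : Prop :=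
  ∀ S, InCylAlg S → Q.m S = P.m S

/-- `P` is an extreme point of the set `E(P_F, F, Σ)` of extensions of its restriction
to the cylinder algebra: any representation of `P` as a nontrivial convex combination
of two extensions forces the two extensions to coincide (with `P`). -/
def ExtremePoint {A : SetAlgebra BinSeq} (P : FA A) : Prop :=
  ∀ Q R : FA A, ExtAgree P Q → ExtAgree P R →
    ∀ α : ℝ, 0 < α → α < 1 →
      (∀ S ∈ A.sets, P.m S = α * Q.m S + (1 - α) * R.m S) →
      ∀ S ∈ A.sets, Q.m S = R.m S

/-- `P` is strongly nonatomic (Savagean): every event can be split in any proportion. -/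
def StronglyNonatomic {Ω : Type*} {A : SetAlgebra Ω} (P : FA A) : Prop :=
  ∀ E ∈ A.sets, ∀ α : ℝ, 0 ≤ α → α ≤ 1 → ∃ F ∈ A.sets, F ⊆ E ∧ P.m F = α * P.m E

/-- The Blackwell–Dubins property: `P` merges with every `Q ≪ P`. -/
def BDProp {A : SetAlgebra BinSeq} (P : FA A) : Prop :=
  ∀ Q : FA A, AbsCont P Q → Merges P Q

/-- The event `A`: the outcome `1` appears infinitely often. -/
def infOften : Set BinSeq := {ω | ∀ T : ℕ, ∃ i ≥ T, ω i = true}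

lemma measurableSet_cyl (ω : BinSeq) (t : ℕ) : MeasurableSet (cyl ω t) := by
  have : cyl ω t = ⋂ i, ⋂ (_ : i < t), (fun ω' : BinSeq => ω' i) ⁻¹' {ω i} := by
    ext ω'; simp [cyl]
  rw [this]
  exact MeasurableSet.iInter fun i => MeasurableSet.iInter fun _ =>
    (measurable_pi_apply i) (MeasurableSet.singleton _)

lemma measurableSet_infOften : MeasurableSet infOften := by
  have : infOften = ⋂ T, ⋃ i, ⋃ (_ : i ≥ T), (fun ω' : BinSeq => ω' i) ⁻¹' {true} := by
    ext ω; simp [infOften]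
  rw [this]
  exact MeasurableSet.iInter fun T => MeasurableSet.iUnion fun i =>
    MeasurableSet.iUnion fun _ => (measurable_pi_apply i) (MeasurableSet.singleton _)

/-- base sequence for covering -/
def extSeq (T : ℕ) (v : Fin T → Bool) (b : Bool) : BinSeq :=
  fun j => if h : j < T then v ⟨j, h⟩ else b

lemma coord_cover (i : ℕ) (b : Bool) :
    {ω : BinSeq | ω i = b} ⊆ ⋃ v : Fin i → Bool, cyl (extSeq i v b) (i + 1) := by
  intro ω hω
  refine Set.mem_iUnion.2 ⟨fun j => ω j, fun j hj => ?_⟩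
  unfold extSeq
  split_ifs with h
  · rfl
  · have : j = i := by omega
    subst this; exact hω

lemma tail_cover (T m : ℕ) :
    {ω : BinSeq | ∀ i, T ≤ i → ω i = false} ⊆
      ⋃ v : Fin T → Bool, cyl (extSeq T v false) (T + m) := by
  intro ω hω
  refine Set.mem_iUnion.2 ⟨fun j => ω j, fun j hj => ?_⟩
  unfold extSeq
  split_ifs with h
  · rfl
  · exact hω j (by omega)

open MeasureTheory in
/-- Example 1.  `Pn n` is the σ-additive probability with independent
coordinates, `Pn n (X_k = 0) = 2^{-k}` for `k ≤ n` and `= 1` for `k > n` (characterized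
by its cylinder values, where coordinate `i` is `X_{i+1}`); `Pinf` has
`Pinf (X_k = 0) = 2^{-k}` for all `k`.  `lam` is a finitely additive probability on ℕ
vanishing on singletons, and `μ = ∫ Pn dλ(n)` (characterized by: if the values
`(Pn n E)` lie within `ε` of `c` on a set of `λ`-measure one, then `μ(E)` is within `ε`
of `c`).  `Pfa = ½ Pinf + ½ μ` and `Pinffa` is `Pinf` viewed as finitely additive.
Then `Pinf ≪ Pfa`, `Pfa` agrees with `Pinf` on cylinders,
`Pinf(A|ωᵗ) − Pfa(A|ωᵗ) = 1/2` everywhere for the event `A` = "1 infinitely often",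
and consequently `Pfa` does not merge with `Pinf`. -/
theorem example_no_merging
    (A : SetAlgebra BinSeq) (hA : A.sets = {S : Set BinSeq | MeasurableSet S})
    (Pn : ℕ → Measure BinSeq) (Pinf : Measure BinSeq)
    [∀ n, IsProbabilityMeasure (Pn n)] [IsProbabilityMeasure Pinf]
    (hPn : ∀ (n : ℕ) (ω : BinSeq) (t : ℕ), Pn n (cyl ω t) =
      ∏ i ∈ Finset.range t,
        if i + 1 ≤ n then
          (if ω i = false then ((2:ENNReal)⁻¹) ^ (i + 1) else 1 - ((2:ENNReal)⁻¹) ^ (i + 1))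
        else (if ω i = false then 1 else 0))
    (hPinf : ∀ (ω : BinSeq) (t : ℕ), Pinf (cyl ω t) =
      ∏ i ∈ Finset.range t,
        (if ω i = false then ((2:ENNReal)⁻¹) ^ (i + 1) else 1 - ((2:ENNReal)⁻¹) ^ (i + 1)))
    (lam : FA (SetAlgebra.top ℕ)) (hlam : ∀ k : ℕ, lam.m {k} = 0)
    (μ : FA A)
    (hμ : ∀ E ∈ A.sets, ∀ (c ε : ℝ), 0 < ε →
      lam.m {n : ℕ | |((Pn n) E).toReal - c| ≤ ε} = 1 → |μ.m E - c| ≤ ε)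
    (Pfa : FA A) (hPfa : ∀ E : Set BinSeq, Pfa.m E = 2⁻¹ * (Pinf E).toReal + 2⁻¹ * μ.m E)
    (Pinffa : FA A) (hPinffa : ∀ E : Set BinSeq, Pinffa.m E = (Pinf E).toReal) :
    AbsCont Pfa Pinffa ∧
    (∀ (ω : BinSeq) (t : ℕ), Pfa.m (cyl ω t) = (Pinf (cyl ω t)).toReal) ∧
    (∀ (ω : BinSeq) (t : ℕ),
      Pinffa.cond infOften (cyl ω t) - Pfa.cond infOften (cyl ω t) = 1 / 2) ∧
    ¬ Merges Pfa Pinffa := by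
  classical
  have hAmeas : ∀ S : Set BinSeq, MeasurableSet S → S ∈ A.sets := by
    intro S hS; rw [hA]; exact hS
  have hcylA : ∀ (ω : BinSeq) (t : ℕ), cyl ω t ∈ A.sets :=
    fun ω t => hAmeas _ (measurableSet_cyl ω t)
  have hinfA : infOften ∈ A.sets := hAmeas _ measurableSet_infOften
  -- Pinf cylinder values are nonzero and finite
  have hc_ne0 : ∀ (ω : BinSeq) (t : ℕ), Pinf (cyl ω t) ≠ 0 := by
    intro ω t
    rw [hPinf]
    rw [Finset.prod_ne_zero_iff]
    intro i _
    split_ifs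
    · exact pow_ne_zero _ (ENNReal.inv_ne_zero.mpr (by norm_num))
    · rw [← pos_iff_ne_zero, tsub_pos_iff_lt]
      exact pow_lt_one₀ (by norm_num) (by norm_num) (by norm_num)
  have hc_pos : ∀ (ω : BinSeq) (t : ℕ), 0 < (Pinf (cyl ω t)).toReal := by
    intro ω t
    exact ENNReal.toReal_pos (hc_ne0 ω t) (measure_ne_top _ _)
  -- Pn n infOften = 0
  have hPn_single : ∀ n i : ℕ, n ≤ i → Pn n {ω : BinSeq | ω i = true} = 0 := by
    intro n i hni
    refine measure_mono_null (coord_cover i true) (measure_iUnion_null fun v => ?_)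
    rw [hPn]
    refine Finset.prod_eq_zero (Finset.self_mem_range_succ i) ?_
    have h1 : ¬ (i + 1 ≤ n) := by omega
    have h2 : extSeq i v true i = true := by unfold extSeq; rw [dif_neg (lt_irrefl i)]
    rw [if_neg h1, h2]
    simp
  have hPnIO : ∀ n : ℕ, Pn n infOften = 0 := by
    intro n
    have hsub : infOften ⊆ ⋃ i, ⋃ (_ : n ≤ i), {ω : BinSeq | ω i = true} := by
      intro ω hω
      obtain ⟨i, hi, hit⟩ := hω n
      exact Set.mem_iUnion.2 ⟨i, Set.mem_iUnion.2 ⟨hi, hit⟩⟩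
    exact measure_mono_null hsub (measure_iUnion_null fun i =>
      measure_iUnion_null fun hi => hPn_single n i hi)
  -- Pinf infOftenᶜ = 0
  have hPinfC : Pinf infOftenᶜ = 0 := by
    have hsub : infOftenᶜ ⊆ ⋃ T, {ω : BinSeq | ∀ i, T ≤ i → ω i = false} := by
      intro ω hω
      simp only [infOften, Set.mem_compl_iff, Set.mem_setOf_eq, not_forall] at hω
      obtain ⟨T, hT⟩ := hω
      push_neg at hT
      refine Set.mem_iUnion.2 ⟨T, fun i hi => ?_⟩
      have := hT i hi
      cases h : ω i
      · rfl
      · exact absurd h this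
    refine measure_mono_null hsub (measure_iUnion_null fun T => ?_)
    -- show Pinf of the tail-false set is 0 via bound 2^T * 2⁻¹^m
    have hbound : ∀ m : ℕ, Pinf {ω : BinSeq | ∀ i, T ≤ i → ω i = false}
        ≤ (2 ^ T : ℕ) * ((2:ENNReal)⁻¹) ^ m := by
      intro m
      calc Pinf {ω : BinSeq | ∀ i, T ≤ i → ω i = false}
          ≤ ∑' v : Fin T → Bool, Pinf (cyl (extSeq T v false) (T + m)) :=
            le_trans (measure_mono (tail_cover T m)) (measure_iUnion_le _)
        _ ≤ ∑' _v : Fin T → Bool, ((2:ENNReal)⁻¹) ^ m := by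
            refine ENNReal.tsum_le_tsum fun v => ?_
            rw [hPinf, Finset.prod_range_add]
            have h1 : (∏ i ∈ Finset.range T,
                (if extSeq T v false i = false then ((2:ENNReal)⁻¹) ^ (i + 1)
                  else 1 - ((2:ENNReal)⁻¹) ^ (i + 1))) ≤ 1 := by
              refine Finset.prod_le_one (fun i _ => zero_le) (fun i _ => ?_)
              split_ifs
              · exact pow_le_one₀ (by norm_num) (by norm_num)
              · exact tsub_le_self
            have h2 : (∏ i ∈ Finset.range m,
                (if extSeq T v false (T + i) = false then ((2:ENNReal)⁻¹) ^ (T + i + 1)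
                  else 1 - ((2:ENNReal)⁻¹) ^ (T + i + 1))) ≤ ((2:ENNReal)⁻¹) ^ m := by
              have : ((2:ENNReal)⁻¹) ^ m = ∏ _i ∈ Finset.range m, (2:ENNReal)⁻¹ := by
                rw [Finset.prod_const, Finset.card_range]
              rw [this]
              refine Finset.prod_le_prod' fun i _ => ?_
              have hfalse : extSeq T v false (T + i) = false := by
                unfold extSeq; rw [dif_neg (by omega)]
              rw [if_pos hfalse]
              calc ((2:ENNReal)⁻¹) ^ (T + i + 1) ≤ ((2:ENNReal)⁻¹) ^ 1 :=
                    pow_le_pow_of_le_one zero_le (by norm_num) (by omega)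
                _ = (2:ENNReal)⁻¹ := pow_one _
            calc _ ≤ 1 * ((2:ENNReal)⁻¹) ^ m := mul_le_mul' h1 h2
              _ = ((2:ENNReal)⁻¹) ^ m := one_mul _
        _ = (2 ^ T : ℕ) * ((2:ENNReal)⁻¹) ^ m := by
            rw [tsum_fintype, Finset.sum_const, Finset.card_univ, nsmul_eq_mul]
            congr 1
            simp [Fintype.card_fun]
    have htends : Tendsto (fun m : ℕ => ((2 ^ T : ℕ) : ENNReal) * ((2:ENNReal)⁻¹) ^ m)
        atTop (𝓝 0) := by
      have h0 : Tendsto (fun m : ℕ => ((2:ENNReal)⁻¹) ^ m) atTop (𝓝 0) :=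
        ENNReal.tendsto_pow_atTop_nhds_zero_of_lt_one (by
          rw [ENNReal.inv_lt_one]; norm_num)
      have := ENNReal.Tendsto.const_mul (a := ((2 ^ T : ℕ) : ENNReal)) h0 (Or.inr (ENNReal.natCast_ne_top _))
      simpa using this
    have : Pinf {ω : BinSeq | ∀ i, T ≤ i → ω i = false} ≤ 0 :=
      ge_of_tendsto' htends hbound
    exact le_antisymm this zero_le
  have hPinfIO : ∀ S : Set BinSeq, Pinf (infOften ∩ S) = Pinf S := by
    intro S
    rw [Set.inter_comm]
    exact measure_inter_conull hPinfC
  -- lam lemmas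
  have htriv : ∀ S : Set ℕ, S ∈ (SetAlgebra.top ℕ).sets := fun S => trivial
  have hlam_le_one : ∀ S : Set ℕ, lam.m S ≤ 1 := by
    intro S
    have hadd := lam.add S (htriv S) Sᶜ (htriv _) disjoint_compl_right
    rw [Set.union_compl_self] at hadd
    have := lam.nonneg Sᶜ (htriv _)
    rw [lam.total] at hadd
    linarith
  have hlam_mono : ∀ S T : Set ℕ, S ⊆ T → lam.m S ≤ lam.m T := by
    intro S T hST
    have hadd := lam.add S (htriv S) (T \ S) (htriv _) disjoint_sdiff_self_right
    rw [Set.union_diff_cancel hST] at hadd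
    have := lam.nonneg (T \ S) (htriv _)
    linarith
  have hlam_empty : lam.m ∅ = 0 := by
    have hadd := lam.add ∅ (htriv _) ∅ (htriv _) (Set.disjoint_empty _)
    rw [Set.union_empty] at hadd
    linarith
  have hlam_lt : ∀ t : ℕ, lam.m {n : ℕ | n < t} = 0 := by
    intro t
    induction t with
    | zero => simpa using hlam_empty
    | succ t ih =>
        have hset : {n : ℕ | n < t + 1} = {n : ℕ | n < t} ∪ {t} := by
          ext n; simp [Nat.lt_succ_iff_lt_or_eq, Nat.le_iff_lt_or_eq, or_comm]
        have hdisj : Disjoint {n : ℕ | n < t} ({t} : Set ℕ) := by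
          rw [Set.disjoint_singleton_right]; simp
        rw [hset, lam.add _ (htriv _) _ (htriv _) hdisj, ih, hlam t, add_zero]
  have hlam_ge : ∀ t : ℕ, lam.m {n : ℕ | t ≤ n} = 1 := by
    intro t
    have hset : (Set.univ : Set ℕ) = {n : ℕ | n < t} ∪ {n : ℕ | t ≤ n} := by
      ext n; simp [Nat.lt_or_ge]
    have hdisj : Disjoint {n : ℕ | n < t} {n : ℕ | t ≤ n} := by
      rw [Set.disjoint_left]; intro n h1 h2; simp at h1 h2; omega
    have := lam.add _ (htriv _) _ (htriv _) hdisj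
    rw [← hset, lam.total, hlam_lt t] at this
    linarith
  have hlam_one : ∀ (t : ℕ) (S : Set ℕ), {n : ℕ | t ≤ n} ⊆ S → lam.m S = 1 := by
    intro t S hS
    have h1 := hlam_mono _ _ hS
    rw [hlam_ge t] at h1
    exact le_antisymm (hlam_le_one S) h1
  -- μ determination
  have hmu_eq : ∀ E : Set BinSeq, E ∈ A.sets → ∀ c : ℝ,
      (∀ ε : ℝ, 0 < ε → lam.m {n : ℕ | |((Pn n) E).toReal - c| ≤ ε} = 1) → μ.m E = c := by
    intro E hE c h
    have habs : ∀ ε : ℝ, 0 < ε → |μ.m E - c| ≤ ε := fun ε hε => hμ E hE c ε hε (h ε hε)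
    by_contra hne
    have hpos : 0 < |μ.m E - c| := abs_pos.2 (sub_ne_zero.2 hne)
    have := habs (|μ.m E - c| / 2) (by linarith)
    linarith
  -- μ on cylinders
  have hmu_cyl : ∀ (ω : BinSeq) (t : ℕ), μ.m (cyl ω t) = (Pinf (cyl ω t)).toReal := by
    intro ω t
    refine hmu_eq _ (hcylA ω t) _ fun ε hε => hlam_one t _ fun n hn => ?_
    have heq : Pn n (cyl ω t) = Pinf (cyl ω t) := by
      rw [hPn, hPinf]
      refine Finset.prod_congr rfl fun i hi => ?_
      rw [Finset.mem_range] at hi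
      rw [if_pos (by simp only [Set.mem_setOf_eq] at hn; omega)]
    simp only [Set.mem_setOf_eq, heq, sub_self, abs_zero]
    linarith
  -- μ on infOften ∩ cylinder
  have hmu_AC : ∀ (ω : BinSeq) (t : ℕ), μ.m (infOften ∩ cyl ω t) = 0 := by
    intro ω t
    refine hmu_eq _ (hAmeas _ (measurableSet_infOften.inter (measurableSet_cyl ω t))) 0
      fun ε hε => hlam_one 0 _ fun n _ => ?_
    have h0 : Pn n (infOften ∩ cyl ω t) = 0 :=
      measure_mono_null Set.inter_subset_left (hPnIO n)
    simp only [Set.mem_setOf_eq, h0]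
    simpa using le_of_lt hε
  -- part 2
  have part2 : ∀ (ω : BinSeq) (t : ℕ), Pfa.m (cyl ω t) = (Pinf (cyl ω t)).toReal := by
    intro ω t
    rw [hPfa, hmu_cyl]
    ring
  -- part 3
  have part3 : ∀ (ω : BinSeq) (t : ℕ),
      Pinffa.cond infOften (cyl ω t) - Pfa.cond infOften (cyl ω t) = 1 / 2 := by
    intro ω t
    have hc := hc_pos ω t
    have hinter : (Pinf (infOften ∩ cyl ω t)).toReal = (Pinf (cyl ω t)).toReal := by
      rw [hPinfIO]
    unfold FA.cond
    rw [hPinffa, hPinffa, hPfa, hPfa, hinter, hmu_AC, hmu_cyl]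
    field_simp
    ring
  refine ⟨?_, part2, part3, ?_⟩
  · -- AbsCont
    intro E hE htend
    have hkey : ∀ n, Pinffa.m (E n) ≤ 2 * Pfa.m (E n) := by
      intro n
      have hmu0 := μ.nonneg (E n) (hE n)
      rw [hPinffa, hPfa]
      linarith
    have h0 : ∀ n, 0 ≤ Pinffa.m (E n) := by
      intro n; rw [hPinffa]; exact ENNReal.toReal_nonneg
    have h2 : Tendsto (fun n => 2 * Pfa.m (E n)) atTop (𝓝 0) := by
      simpa using htend.const_mul 2
    exact squeeze_zero h0 hkey h2
  · -- not merges
    intro hM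
    have h14 := hM (1/4) (by norm_num)
    have hset : ∀ t : ℕ, {ω : BinSeq | ∃ E ∈ A.sets,
        (1/4 : ℝ) < |Pfa.cond E (cyl ω t) - Pinffa.cond E (cyl ω t)|} = Set.univ := by
      intro t
      refine Set.eq_univ_of_forall fun ω => ?_
      refine ⟨infOften, hinfA, ?_⟩
      have := part3 ω t
      have heq : Pfa.cond infOften (cyl ω t) - Pinffa.cond infOften (cyl ω t) = -(1/2) := by
        linarith
      rw [heq, abs_neg]
      rw [abs_of_pos (by norm_num)]
      norm_num
    simp only [hset, Pinffa.total] at h14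
    have := tendsto_nhds_unique h14 tendsto_const_nhds
    norm_num at this
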